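/- arXiv:2304.01140 — 3 statements merged into one kernel-verified Lean document; each statement's English description precedes it below -/
import Mathlib

section
/- Let X be a real Banach space, let A : X → (X →L ℝ) be a twice continuously Fréchet differentiable map into the continuous dual of X (so that Ã(w)(φ) := (A w)(φ) is a semilinear form, linear in the test function φ), let F ∈ X →L ℝ be a continuous linear functional, and let J : X → ℝ be twice continuously Fréchet differentiable. Suppose u ∈ X solves the primal problem Ã(u)(φ) = F(φ) for all φ ∈ X, and z ∈ X solves the fine adjoint problem Ã'_u(u)(δu, z) = J'_u(u)(δu) for all δu ∈ X, where Ã'_u and J'_u denote Fréchet derivatives with respect to the first argument. Then for every ũ ∈ X, setting e := u − ũ, J(u) − J(ũ) = −Ã(ũ)(z) + F(z) + R, where the quadratic remainder is R = ∫_0^1 [ Ã''_{uu}(ũ + s e)(e, e, z) − J''_{uu}(ũ + s e)(e, e) ] · s ds. -/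
open intervalIntegral

/-- **Error representation for nonlinear problems.**
Let `X` be a real Banach space, `A : X → (X →L ℝ)` a `C²` map (so that
`Ã(w)(φ) := (A w)(φ)` is a semilinear form, linear in `φ`), `F` a continuous
linear functional and `J : X → ℝ` a `C²` goal functional. If `u` solves the
primal problem `Ã(u)(φ) = F(φ)` for all `φ` and `z` solves the fine adjoint
problem `Ã'_u(u)(δu, z) = J'_u(u)(δu)` for all `δu`, then for every `ũ ∈ X`,
with `e := u − ũ`,
`J(u) − J(ũ) = −Ã(ũ)(z) + F(z) + R`, where
`R = ∫₀¹ [Ã''(ũ + s e)(e, e, z) − J''(ũ + s e)(e, e)] · s ds`. -/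
theorem dwr_error_representation_nonlinear
    {X : Type*} [NormedAddCommGroup X] [NormedSpace ℝ X] [CompleteSpace X]
    (A : X → (X →L[ℝ] ℝ)) (hA : ContDiff ℝ 2 A)
    (F : X →L[ℝ] ℝ)
    (J : X → ℝ) (hJ : ContDiff ℝ 2 J)
    (u z : X)
    (hprimal : ∀ φ : X, A u φ = F φ)
    (hadjoint : ∀ δu : X, fderiv ℝ A u δu z = fderiv ℝ J u δu)
    (utilde : X) :
    J u - J utilde =
      -(A utilde z) + F z +
        ∫ s in (0:ℝ)..1,
          ((fderiv ℝ (fderiv ℝ A) (utilde + s • (u - utilde)))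
              (u - utilde) (u - utilde) z
            - (fderiv ℝ (fderiv ℝ J) (utilde + s • (u - utilde)))
                (u - utilde) (u - utilde)) * s := by
  set e : X := u - utilde with he
  set γ : ℝ → X := fun s => utilde + s • e with hγ
  have hγd : ∀ s : ℝ, HasDerivAt γ e s := by
    intro s
    have := ((hasDerivAt_id s).smul_const e).const_add utilde
    simpa [hγ] using this
  have hγc : Continuous γ := by
    fun_prop
  have hA1 : ContDiff ℝ 1 (fderiv ℝ A) := hA.fderiv_right (by norm_num)
  have hJ1 : ContDiff ℝ 1 (fderiv ℝ J) := hJ.fderiv_right (by norm_num)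
  set f1 : ℝ → ℝ := fun s => A (γ s) z - J (γ s) with hf1
  set f2 : ℝ → ℝ := fun s => fderiv ℝ A (γ s) e z - fderiv ℝ J (γ s) e with hf2
  set f3 : ℝ → ℝ := fun s =>
    fderiv ℝ (fderiv ℝ A) (γ s) e e z - fderiv ℝ (fderiv ℝ J) (γ s) e e with hf3
  have h1 : ∀ s : ℝ, HasDerivAt f1 (f2 s) s := by
    intro s
    have hAd : HasDerivAt (fun s => A (γ s)) (fderiv ℝ A (γ s) e) s :=
      ((hA.differentiable two_ne_zero).differentiableAt.hasFDerivAt).comp_hasDerivAt s (hγd s)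
    have hAz : HasDerivAt (fun s => A (γ s) z) (fderiv ℝ A (γ s) e z) s := by
      have := hAd.clm_apply (hasDerivAt_const s z)
      simpa using this
    have hJd : HasDerivAt (fun s => J (γ s)) (fderiv ℝ J (γ s) e) s :=
      ((hJ.differentiable two_ne_zero).differentiableAt.hasFDerivAt).comp_hasDerivAt s (hγd s)
    exact hAz.sub hJd
  have h2 : ∀ s : ℝ, HasDerivAt f2 (f3 s) s := by
    intro s
    have hAd : HasDerivAt (fun s => fderiv ℝ A (γ s)) (fderiv ℝ (fderiv ℝ A) (γ s) e) s :=
      ((hA1.differentiable one_ne_zero).differentiableAt.hasFDerivAt).comp_hasDerivAt s (hγd s)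
    have hAe : HasDerivAt (fun s => fderiv ℝ A (γ s) e) (fderiv ℝ (fderiv ℝ A) (γ s) e e) s := by
      have := hAd.clm_apply (hasDerivAt_const s e)
      simpa using this
    have hAez : HasDerivAt (fun s => fderiv ℝ A (γ s) e z)
        (fderiv ℝ (fderiv ℝ A) (γ s) e e z) s := by
      have := hAe.clm_apply (hasDerivAt_const s z)
      simpa using this
    have hJd : HasDerivAt (fun s => fderiv ℝ J (γ s)) (fderiv ℝ (fderiv ℝ J) (γ s) e) s :=
      ((hJ1.differentiable one_ne_zero).differentiableAt.hasFDerivAt).comp_hasDerivAt s (hγd s)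
    have hJe : HasDerivAt (fun s => fderiv ℝ J (γ s) e) (fderiv ℝ (fderiv ℝ J) (γ s) e e) s := by
      have := hJd.clm_apply (hasDerivAt_const s e)
      simpa using this
    exact hAez.sub hJe
  have hc2 : Continuous f2 := by
    have hca : Continuous fun s => fderiv ℝ A (γ s) :=
      (hA1.continuous).comp hγc
    have hcj : Continuous fun s => fderiv ℝ J (γ s) :=
      (hJ1.continuous).comp hγc
    exact ((hca.clm_apply continuous_const).clm_apply continuous_const).sub
      (hcj.clm_apply continuous_const)
  have hc3 : Continuous f3 := by
    have hca :=
      (hA1.continuous_fderiv one_ne_zero).comp hγc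
    have hcj :=
      (hJ1.continuous_fderiv one_ne_zero).comp hγc
    exact (((hca.clm_apply continuous_const).clm_apply continuous_const).clm_apply
      continuous_const).sub ((hcj.clm_apply continuous_const).clm_apply continuous_const)
  have hγ0 : γ 0 = utilde := by simp [hγ]
  have hγ1 : γ 1 = u := by simp [hγ, he]
  have hP : (∫ s in (0:ℝ)..1, f2 s) = f1 1 - f1 0 :=
    integral_eq_sub_of_hasDerivAt (fun x _ => h1 x) (hc2.intervalIntegrable 0 1)
  have hQ : (∫ s in (0:ℝ)..1, (f2 s + s * f3 s)) = f2 1 := by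
    have hg : ∀ s : ℝ, HasDerivAt (fun s => s * f2 s) (f2 s + s * f3 s) s := by
      intro s
      have := (hasDerivAt_id s).mul (h2 s)
      exact this.congr_deriv (by simp [mul_comm])
    have := integral_eq_sub_of_hasDerivAt (f := fun s => s * f2 s) (fun x _ => hg x)
      ((hc2.add (continuous_id'.mul hc3)).intervalIntegrable 0 1)
    simpa using this
  have hR : (∫ s in (0:ℝ)..1, f3 s * s) = f2 1 - (f1 1 - f1 0) := by
    have hsub : (∫ s in (0:ℝ)..1, f3 s * s)
        = (∫ s in (0:ℝ)..1, (f2 s + s * f3 s)) - ∫ s in (0:ℝ)..1, f2 s := by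
      rw [← integral_sub (f := fun s => f2 s + s * f3 s) ((hc2.add (continuous_id'.mul hc3)).intervalIntegrable 0 1)
        (hc2.intervalIntegrable 0 1)]
      apply integral_congr
      intro s _
      simp only [Pi.add_apply, Pi.sub_apply]
      ring
    rw [hsub, hP, hQ]
  have hf21 : f2 1 = 0 := by
    simp [hf2, hγ1, hadjoint e]
  have hf11 : f1 1 = F z - J u := by
    simp [hf1, hγ1, hprimal z]
  have hf10 : f1 0 = A utilde z - J utilde := by
    simp [hf1, hγ0]
  have : (∫ s in (0:ℝ)..1,
          ((fderiv ℝ (fderiv ℝ A) (utilde + s • (u - utilde)))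
              (u - utilde) (u - utilde) z
            - (fderiv ℝ (fderiv ℝ J) (utilde + s • (u - utilde)))
                (u - utilde) (u - utilde)) * s) = ∫ s in (0:ℝ)..1, f3 s * s := rfl
  rw [this, hR, hf21, hf11, hf10]
  ring
end

section
/- Let Y ∈ ℝ^{n×m}, U ∈ ℝ^{n×N}, S ∈ ℝ^{N×N}, V ∈ ℝ^{m×N} with Y = U S Vᵀ, and let B ∈ ℝ^{n×b}. Let Q_B ∈ ℝ^{n×b} and R_B ∈ ℝ^{b×b} satisfy Q_B R_B = (I_n − U Uᵀ) B. Define the block matrix F = [ S , UᵀB ; 0 , R_B ] ∈ ℝ^{(N+b)×(N+b)}. Then the column-augmented matrix factorizes as [Y B] = [U Q_B] · F · ( blockdiag(V, I_b) )ᵀ, i.e., [Y B] = [U Q_B] F [ V , 0 ; 0 , I_b ]ᵀ. -/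
open Matrix

/-- **Core factorization of the additive rank-b column update of the SVD.**
If `Y = U S Vᵀ`, `B` is a bunch matrix of new columns, and
`Q_B R_B = (I − U Uᵀ) B`, then with `F = [S, UᵀB; 0, R_B]` the column-augmented
matrix factorizes as `[Y B] = [U Q_B] · F · blockdiag(V, I_b)ᵀ`. -/
theorem isvd_column_update_factorization
    {n m b N : ℕ}
    (Y : Matrix (Fin n) (Fin m) ℝ)
    (U : Matrix (Fin n) (Fin N) ℝ)
    (S : Matrix (Fin N) (Fin N) ℝ)
    (V : Matrix (Fin m) (Fin N) ℝ)
    (hY : Y = U * S * Vᵀ)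
    (B : Matrix (Fin n) (Fin b) ℝ)
    (QB : Matrix (Fin n) (Fin b) ℝ) (RB : Matrix (Fin b) (Fin b) ℝ)
    (hQR : QB * RB = (1 - U * Uᵀ) * B) :
    Matrix.fromCols Y B =
      Matrix.fromCols U QB
        * Matrix.fromBlocks S (Uᵀ * B) 0 RB
        * (Matrix.fromBlocks V 0 0 (1 : Matrix (Fin b) (Fin b) ℝ))ᵀ := by
  rw [fromBlocks_transpose, Matrix.mul_assoc, fromBlocks_multiply,
    fromCols_mul_fromBlocks]
  simp [hY, hQR, Matrix.mul_assoc, sub_mul, Matrix.sub_mul, Matrix.mul_sub]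
end

section
/- Let Y = U S Vᵀ with U ∈ ℝ^{n×N}, V ∈ ℝ^{m×N} having orthonormal columns (UᵀU = I_N, VᵀV = I_N) and S ∈ ℝ^{N×N}. Let B ∈ ℝ^{n×b}, let Q_B R_B = (I_n − U Uᵀ)B be a QR decomposition with Q_Bᵀ Q_B = I_b and R_B ∈ ℝ^{b×b} invertible, and let F = [ S , UᵀB ; 0 , R_B ] = U' S' V'ᵀ be a singular value decomposition of the square matrix F ∈ ℝ^{(N+b)×(N+b)} with U'ᵀU' = I_{N+b} and V'ᵀV' = I_{N+b}. Define Ũ := [U Q_B] U', S̃ := S', Ṽ := blockdiag(V, I_b) V'. Then [Y B] = Ũ S̃ Ṽᵀ, ŨᵀŨ = I_{N+b}, and ṼᵀṼ = I_{N+b}; that is, (Ũ, S̃, Ṽ) is a singular value decomposition of the column-updated matrix [Y B]. -/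
open Matrix

/-- **Correctness of the additive rank-b column update of the SVD (Brand).**
Given an SVD `Y = U S Vᵀ` with orthonormal columns, a bunch matrix `B`, a QR
decomposition `Q_B R_B = (I − U Uᵀ) B` with `Q_B` orthonormal and `R_B`
invertible, and an SVD `F = U' S' V'ᵀ` of `F = [S, UᵀB; 0, R_B]`, the triple
`Ũ := [U Q_B] U'`, `S̃ := S'`, `Ṽ := blockdiag(V, I_b) V'` is an SVD of the
column-updated matrix `[Y B]`. -/
theorem isvd_column_update_is_svd
    {n m b N : ℕ}
    (Y : Matrix (Fin n) (Fin m) ℝ)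
    (U : Matrix (Fin n) (Fin N) ℝ)
    (S : Matrix (Fin N) (Fin N) ℝ)
    (V : Matrix (Fin m) (Fin N) ℝ)
    (hU : Uᵀ * U = 1) (hV : Vᵀ * V = 1)
    (hY : Y = U * S * Vᵀ)
    (B : Matrix (Fin n) (Fin b) ℝ)
    (QB : Matrix (Fin n) (Fin b) ℝ) (RB : Matrix (Fin b) (Fin b) ℝ)
    (hQR : QB * RB = (1 - U * Uᵀ) * B)
    (hQB : QBᵀ * QB = 1) (hRB : IsUnit RB)
    (U' S' V' : Matrix (Fin N ⊕ Fin b) (Fin N ⊕ Fin b) ℝ)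
    (hF : Matrix.fromBlocks S (Uᵀ * B) 0 RB = U' * S' * V'ᵀ)
    (hU' : U'ᵀ * U' = 1) (hV' : V'ᵀ * V' = 1) :
    Matrix.fromCols Y B =
        (Matrix.fromCols U QB * U') * S'
          * ((Matrix.fromBlocks V 0 0 (1 : Matrix (Fin b) (Fin b) ℝ)) * V')ᵀ ∧
      (Matrix.fromCols U QB * U')ᵀ * (Matrix.fromCols U QB * U') = 1 ∧
      ((Matrix.fromBlocks V 0 0 (1 : Matrix (Fin b) (Fin b) ℝ)) * V')ᵀ
          * ((Matrix.fromBlocks V 0 0 (1 : Matrix (Fin b) (Fin b) ℝ)) * V') = 1 := by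
  obtain ⟨iRB⟩ := hRB.nonempty_invertible
  have hUQ : Uᵀ * QB = 0 := by
    have h1 : Uᵀ * (QB * RB) = 0 := by
      rw [hQR, ← Matrix.mul_assoc, Matrix.mul_sub, Matrix.mul_one, ← Matrix.mul_assoc, hU,
        Matrix.one_mul, sub_self, Matrix.zero_mul]
    have h2 := congrArg (· * ⅟RB) h1
    simpa [Matrix.mul_assoc] using h2
  have hQU : QBᵀ * U = 0 := by
    have := congrArg Matrix.transpose hUQ
    simpa [Matrix.transpose_mul] using this
  have hOrthoU : (Matrix.fromCols U QB)ᵀ * Matrix.fromCols U QB = 1 := by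
    rw [Matrix.transpose_fromCols, Matrix.fromRows_mul_fromCols, hU, hQB, hUQ, hQU,
      ← Matrix.fromBlocks_one]
  have hOrthoV : (Matrix.fromBlocks V 0 0 (1 : Matrix (Fin b) (Fin b) ℝ))ᵀ *
      Matrix.fromBlocks V 0 0 (1 : Matrix (Fin b) (Fin b) ℝ) = 1 := by
    rw [Matrix.fromBlocks_transpose, Matrix.fromBlocks_multiply]
    simp [hV, ← Matrix.fromBlocks_one]
  refine ⟨?_, ?_, ?_⟩
  · have key : Matrix.fromCols U QB * (Matrix.fromBlocks S (Uᵀ * B) 0 RB) *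
        (Matrix.fromBlocks V 0 0 (1 : Matrix (Fin b) (Fin b) ℝ))ᵀ = Matrix.fromCols Y B := by
      rw [Matrix.fromCols_mul_fromBlocks, Matrix.fromBlocks_transpose,
        Matrix.transpose_zero, Matrix.transpose_zero, Matrix.transpose_one,
        Matrix.fromCols_mul_fromBlocks]
      have hB : U * (Uᵀ * B) + QB * RB = B := by
        rw [hQR, Matrix.sub_mul, Matrix.one_mul, ← Matrix.mul_assoc]
        abel
      rw [hB]
      simp [hY, Matrix.mul_assoc]
    calc Matrix.fromCols Y B
        = Matrix.fromCols U QB * (Matrix.fromBlocks S (Uᵀ * B) 0 RB) *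
            (Matrix.fromBlocks V 0 0 (1 : Matrix (Fin b) (Fin b) ℝ))ᵀ := key.symm
      _ = _ := by rw [hF]; simp only [Matrix.transpose_mul, Matrix.transpose_transpose,
            Matrix.mul_assoc]
  · rw [Matrix.transpose_mul, Matrix.mul_assoc, ← Matrix.mul_assoc (Matrix.fromCols U QB)ᵀ,
      hOrthoU, Matrix.one_mul, hU']
  · rw [Matrix.transpose_mul, Matrix.mul_assoc, ← Matrix.mul_assoc _ _ V',
      hOrthoV, Matrix.one_mul, hV']
end
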